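/- For irrational x, a rational p/q is a best signed approximation of x if and only if p/q is a principal convergent p_n/q_n (n ≥ 0) or an intermediate convergent (k p_{n−1} + p_{n−2})/(k q_{n−1} + q_{n−2}) with 1 ≤ k < a_n, n ≥ 1, of the regular continued fraction of x. -/

import Mathlib

/-- Iterates of the Gauss map procedure producing complete quotients of `x`:
`t₀ = x`, `tₙ₊₁ = 1/(tₙ − ⌊tₙ⌋)`. -/
noncomputable def gaussIter (x : ℝ) : ℕ → ℝ
  | 0 => x
  | n + 1 => (gaussIter x n - ⌊gaussIter x n⌋)⁻¹

/-- The partial quotients `aₙ = ⌊tₙ⌋` of the regular continued fraction of `x`. -/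
noncomputable def cfA (x : ℝ) (n : ℕ) : ℤ := ⌊gaussIter x n⌋

/-- Numerators of the principal convergents, shifted by one:
`cfP x 0 = p₋₁ = 1`, `cfP x (n+1) = pₙ`. -/
noncomputable def cfP (x : ℝ) : ℕ → ℤ
  | 0 => 1
  | 1 => ⌊x⌋
  | n + 2 => cfA x (n + 1) * cfP x (n + 1) + cfP x n

/-- Denominators of the principal convergents, shifted by one:
`cfQ x 0 = q₋₁ = 0`, `cfQ x (n+1) = qₙ`. -/
noncomputable def cfQ (x : ℝ) : ℕ → ℤ
  | 0 => 0
  | 1 => 1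
  | n + 2 => cfA x (n + 1) * cfQ x (n + 1) + cfQ x n

/-- `r = p/q` is a best signed approximation of `x`. -/
def IsBestSignedApprox (x : ℝ) (r : ℚ) : Prop :=
  ∀ s : ℚ, s.den ≤ r.den → s ≠ r →
    Real.sign ((s.den : ℝ) * x - s.num) = Real.sign ((r.den : ℝ) * x - r.num) →
    |(r.den : ℝ) * x - r.num| < |(s.den : ℝ) * x - s.num|


section Infra
variable {x : ℝ}

lemma irrational_gaussIter (hx : Irrational x) : ∀ n, Irrational (gaussIter x n)
  | 0 => hx
  | n + 1 => ((irrational_gaussIter hx n).sub_intCast ⌊gaussIter x n⌋).inv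

lemma gauss_frac_pos (hx : Irrational x) (n : ℕ) :
    0 < gaussIter x n - ⌊gaussIter x n⌋ := by
  have h := (irrational_gaussIter hx n).ne_int ⌊gaussIter x n⌋
  have := Int.floor_le (gaussIter x n)
  cases' lt_or_eq_of_le this with h1 h2
  · linarith
  · exact absurd h2.symm (by exact_mod_cast h)

lemma cfA_lt (hx : Irrational x) (n : ℕ) : (cfA x n : ℝ) < gaussIter x n := by
  have := gauss_frac_pos hx n
  unfold cfA; linarith

lemma gauss_frac_lt_one (n : ℕ) : gaussIter x n - ⌊gaussIter x n⌋ < 1 := by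
  have := Int.lt_floor_add_one (gaussIter x n)
  linarith

lemma one_lt_gaussIter (hx : Irrational x) (n : ℕ) : 1 < gaussIter x (n + 1) := by
  show 1 < (gaussIter x n - ⌊gaussIter x n⌋)⁻¹
  exact one_lt_inv_iff₀.mpr ⟨gauss_frac_pos hx n, gauss_frac_lt_one n⟩

lemma one_le_cfA (hx : Irrational x) (n : ℕ) : 1 ≤ cfA x (n + 1) := by
  have h := one_lt_gaussIter hx n
  show (1:ℤ) ≤ ⌊gaussIter x (n+1)⌋
  rw [Int.le_floor]; push_cast; linarith

lemma gaussIter_lt (n : ℕ) : gaussIter x n < (cfA x n : ℝ) + 1 := by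
  have := gauss_frac_lt_one (x := x) n
  unfold cfA; linarith

lemma cfQ_nonneg_pos (hx : Irrational x) : ∀ n, 0 ≤ cfQ x n ∧ 1 ≤ cfQ x (n + 1)
  | 0 => ⟨le_refl 0, le_refl 1⟩
  | n + 1 => by
    obtain ⟨h0, h1⟩ := cfQ_nonneg_pos hx n
    refine ⟨by linarith, ?_⟩
    show 1 ≤ cfA x (n+1) * cfQ x (n+1) + cfQ x n
    have := one_le_cfA hx n
    nlinarith

lemma cfQ_nonneg (hx : Irrational x) (n : ℕ) : 0 ≤ cfQ x n := (cfQ_nonneg_pos hx n).1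
lemma cfQ_pos (hx : Irrational x) (n : ℕ) : 1 ≤ cfQ x (n + 1) := (cfQ_nonneg_pos hx n).2

lemma cfQ_ge (hx : Irrational x) : ∀ n : ℕ, (n : ℤ) - 1 ≤ cfQ x n
  | 0 => by simp [cfQ]
  | 1 => by simp [cfQ]
  | n + 2 => by
    have h1 := cfQ_ge hx (n + 1)
    have h0 := cfQ_ge hx n
    have hp := cfQ_pos hx n
    have hn0 := cfQ_nonneg hx n
    have ha := one_le_cfA hx n
    show (↑(n+2) : ℤ) - 1 ≤ cfA x (n+1) * cfQ x (n+1) + cfQ x n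
    push_cast
    rcases n with _ | m
    · norm_num [cfQ]; exact one_le_cfA hx 0
    · have hq1 := cfQ_pos hx m
      have hq2 := cfQ_pos hx (m+1)
      push_cast at h1 ⊢
      nlinarith [mul_nonneg (by linarith : (0:ℤ) ≤ cfA x (m+1+1) - 1)
        (by linarith : (0:ℤ) ≤ cfQ x (m+1+1))]

end Infra

noncomputable def cfD (x : ℝ) (n : ℕ) : ℝ := (cfQ x n : ℝ) * x - (cfP x n : ℝ)

section Infra2
variable {x : ℝ}

lemma cfD_zero : cfD x 0 = -1 := by simp [cfD, cfQ, cfP]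

lemma cfD_ne_zero (hx : Irrational x) (n : ℕ) : cfD x n ≠ 0 := by
  rcases n with _ | m
  · rw [cfD_zero]; norm_num
  · intro h
    have hq : (1:ℝ) ≤ (cfQ x (m+1) : ℝ) := by exact_mod_cast cfQ_pos hx m
    have hx' := (irrational_iff_ne_rational x).mp hx (cfP x (m+1)) (cfQ x (m+1))
      (by have := cfQ_pos hx m; omega)
    apply hx'
    unfold cfD at h
    have hq0 : (cfQ x (m+1) : ℝ) ≠ 0 := by linarith
    field_simp
    linarith

lemma gauss_mul_cfD (hx : Irrational x) :
    ∀ n : ℕ, gaussIter x (n + 1) * cfD x (n + 1) + cfD x n = 0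
  | 0 => by
    have h := gauss_frac_pos hx 0
    show (gaussIter x 0 - ⌊gaussIter x 0⌋)⁻¹ * cfD x 1 + cfD x 0 = 0
    have hg0 : gaussIter x 0 = x := rfl
    rw [cfD_zero]
    unfold cfD
    simp only [cfQ, cfP, hg0] at *
    push_cast
    have hfr : Int.fract x ≠ 0 := by unfold Int.fract; exact ne_of_gt h
    field_simp
    norm_num
  | n + 1 => by
    have ih := gauss_mul_cfD hx n
    have h2 : cfD x (n + 2) = (cfA x (n+1) - gaussIter x (n+1)) * cfD x (n+1) := by
      have hD2 : cfD x (n+2) = (cfA x (n+1) : ℝ) * cfD x (n+1) + cfD x n := by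
        unfold cfD
        show ((cfA x (n+1) * cfQ x (n+1) + cfQ x n : ℤ):ℝ) * x -
            ((cfA x (n+1) * cfP x (n+1) + cfP x n : ℤ):ℝ) = _
        push_cast
        ring
      rw [hD2]
      have : cfD x n = -(gaussIter x (n+1) * cfD x (n+1)) := by linarith
      rw [this]; ring
    have hfr := gauss_frac_pos hx (n+1)
    have hne : gaussIter x (n+1) - (cfA x (n+1) : ℝ) ≠ 0 := by
      unfold cfA; unfold cfA at hfr; linarith
    have hg : gaussIter x (n+2) = (gaussIter x (n+1) - (cfA x (n+1):ℝ))⁻¹ := rfl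
    rw [hg, h2]
    field_simp
    ring

lemma cfD_succ (hx : Irrational x) (n : ℕ) :
    cfD x n = -(gaussIter x (n + 1) * cfD x (n + 1)) := by
  have := gauss_mul_cfD hx n; linarith

lemma cfD_mul_neg (hx : Irrational x) (n : ℕ) : cfD x (n + 1) * cfD x n < 0 := by
  rw [cfD_succ hx n]
  have h1 := one_lt_gaussIter hx n
  have h2 := cfD_ne_zero hx (n+1)
  have : 0 < cfD x (n+1) * cfD x (n+1) := mul_self_pos.mpr h2
  nlinarith

lemma cfD_one_pos (hx : Irrational x) : 0 < cfD x 1 := by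
  have h := gauss_frac_pos hx 0
  show 0 < (cfQ x 1 : ℝ) * x - (cfP x 1 : ℝ)
  simp only [cfQ, cfP]
  push_cast
  have hg0 : gaussIter x 0 = x := rfl
  rw [hg0] at h
  linarith

lemma cfDet (x : ℝ) : ∀ n : ℕ,
    (cfP x n * cfQ x (n+1) - cfP x (n+1) * cfQ x n) ^ 2 = 1
  | 0 => by simp [cfP, cfQ]
  | n + 1 => by
    have ih := cfDet x n
    have h : cfP x (n+1) * cfQ x (n+2) - cfP x (n+2) * cfQ x (n+1)
        = -(cfP x n * cfQ x (n+1) - cfP x (n+1) * cfQ x n) := by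
      show cfP x (n+1) * (cfA x (n+1) * cfQ x (n+1) + cfQ x n)
          - (cfA x (n+1) * cfP x (n+1) + cfP x n) * cfQ x (n+1) = _
      ring
    rw [h]
    nlinarith [ih]

lemma coords (x : ℝ) (n : ℕ) (a b : ℤ) :
    ∃ u v : ℤ, b = u * cfQ x (n+1) + v * cfQ x n ∧ a = u * cfP x (n+1) + v * cfP x n := by
  set d := cfP x n * cfQ x (n+1) - cfP x (n+1) * cfQ x n with hd
  have hd2 : d ^ 2 = 1 := cfDet x n
  refine ⟨d * (b * cfP x n - a * cfQ x n), d * (a * cfQ x (n+1) - b * cfP x (n+1)), ?_, ?_⟩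
  · have : d * (b * cfP x n - a * cfQ x n) * cfQ x (n+1)
        + d * (a * cfQ x (n+1) - b * cfP x (n+1)) * cfQ x n = b * d^2 := by ring
    rw [this, hd2]; ring
  · have : d * (b * cfP x n - a * cfQ x n) * cfP x (n+1)
        + d * (a * cfQ x (n+1) - b * cfP x (n+1)) * cfP x n = a * d^2 := by ring
    rw [this, hd2]; ring

lemma lin_comb (hx : Irrational x) (n : ℕ) (u v : ℤ) :
    ((u * cfQ x (n+1) + v * cfQ x n : ℤ) : ℝ) * x - ((u * cfP x (n+1) + v * cfP x n : ℤ) : ℝ)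
      = ((u : ℝ) - v * gaussIter x (n+1)) * cfD x (n+1) := by
  have h := cfD_succ hx n
  have expand : ((u * cfQ x (n+1) + v * cfQ x n : ℤ) : ℝ) * x
      - ((u * cfP x (n+1) + v * cfP x n : ℤ) : ℝ)
      = (u:ℝ) * cfD x (n+1) + (v:ℝ) * cfD x n := by
    unfold cfD; push_cast; ring
  rw [expand, h]; ring

end Infra2


section Core
variable {x : ℝ}

lemma core_lemma (hx : Irrational x) (m : ℕ) (k a b : ℤ)
    (hk0 : 0 ≤ k) (hkt : (k : ℝ) < gaussIter x (m+1)) (hb : 1 ≤ b)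
    (hsign : 0 < ((b:ℝ) * x - (a:ℝ)) *
      (((k * cfQ x (m+1) + cfQ x m : ℤ):ℝ) * x - ((k * cfP x (m+1) + cfP x m : ℤ):ℝ)))
    (habs : |(b:ℝ) * x - (a:ℝ)| ≤
      |((k * cfQ x (m+1) + cfQ x m : ℤ):ℝ) * x - ((k * cfP x (m+1) + cfP x m : ℤ):ℝ)|) :
    (b = k * cfQ x (m+1) + cfQ x m ∧ a = k * cfP x (m+1) + cfP x m) ∨
      (k+1) * cfQ x (m+1) + cfQ x m ≤ b := by
  obtain ⟨u, v, hbv, hav⟩ := coords x m a b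
  set t := gaussIter x (m+1) with hts
  set D := cfD x (m+1) with hDs
  have hE : ((k * cfQ x (m+1) + cfQ x m : ℤ):ℝ) * x - ((k * cfP x (m+1) + cfP x m : ℤ):ℝ)
      = ((k:ℝ) - 1 * t) * D := by
    have h := lin_comb hx m k 1
    push_cast at h ⊢
    linarith
  have hB : (b:ℝ) * x - (a:ℝ) = ((u:ℝ) - v * t) * D := by
    rw [hbv, hav]; exact lin_comb hx m u v
  have hD : D ≠ 0 := cfD_ne_zero hx (m+1)
  have hD2 : 0 < D * D := mul_self_pos.mpr hD
  have ht : 1 < t := one_lt_gaussIter hx m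
  have htk : 0 < t - (k:ℝ) := by linarith
  rw [hB, hE] at hsign habs
  -- same sign:
  have hprod : 0 < ((u:ℝ) - v * t) * ((k:ℝ) - 1 * t) := by nlinarith
  have hneg : (u:ℝ) - v * t < 0 := by nlinarith
  have hpos : 0 < (v:ℝ) * t - u := by linarith
  -- absolute values
  have habs' : (v:ℝ) * t - u ≤ t - k := by
    rw [abs_mul, abs_mul] at habs
    have hDpos : 0 < |D| := abs_pos.mpr hD
    have h1 : |(u:ℝ) - v * t| ≤ |(k:ℝ) - 1 * t| := le_of_mul_le_mul_right habs hDpos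
    rw [abs_of_neg hneg, abs_of_neg (by linarith : (k:ℝ) - 1 * t < 0)] at h1
    linarith
  have hQ1 : 1 ≤ cfQ x (m+1) := cfQ_pos hx m
  have hQ0 : 0 ≤ cfQ x m := cfQ_nonneg hx m
  rcases lt_trichotomy v 1 with hv | hv | hv
  · -- v ≤ 0 : contradiction
    exfalso
    have hv0 : v ≤ 0 := by omega
    have hv0' : (v:ℝ) ≤ 0 := by exact_mod_cast hv0
    have hvt : (v:ℝ) * t ≤ v := by nlinarith
    have huv : (u:ℝ) < (v:ℝ) := by linarith
    have huv' : u ≤ -1 := by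
      have : u < v := by exact_mod_cast huv
      omega
    nlinarith [hbv, mul_le_mul_of_nonneg_right (by omega : u ≤ -1) (by omega : (0:ℤ) ≤ cfQ x (m+1)),
      mul_nonpos_of_nonpos_of_nonneg hv0 hQ0]
  · -- v = 1
    subst hv
    have hku : (k:ℝ) ≤ u := by push_cast at habs'; linarith
    have hku' : k ≤ u := by exact_mod_cast hku
    rcases eq_or_lt_of_le hku' with he | hlt
    · left
      constructor
      · rw [hbv, ← he]; ring
      · rw [hav, ← he]; ring
    · right
      have : k + 1 ≤ u := by omega
      rw [hbv]
      nlinarith [mul_le_mul_of_nonneg_right this (by omega : (0:ℤ) ≤ cfQ x (m+1))]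
  · -- v ≥ 2
    right
    have hv2 : 2 ≤ v := hv
    have hv2' : (2:ℝ) ≤ (v:ℝ) := by exact_mod_cast hv2
    have hA : (cfA x (m+1) : ℝ) < t := cfA_lt hx (m+1)
    have hA1 : 1 ≤ cfA x (m+1) := one_le_cfA hx m
    have hu_real : t * ((v:ℝ) - 1) + k ≤ (u:ℝ) := by nlinarith
    have hu_gt : ((cfA x (m+1) * (v - 1) + k : ℤ) : ℝ) < (u:ℝ) := by
      push_cast
      nlinarith
    have hu : cfA x (m+1) * (v - 1) + k + 1 ≤ u := by
      have : cfA x (m+1) * (v - 1) + k < u := by exact_mod_cast hu_gt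
      omega
    rw [hbv]
    nlinarith [mul_le_mul_of_nonneg_right hu (by omega : (0:ℤ) ≤ cfQ x (m+1)),
      mul_le_mul_of_nonneg_right (by omega : 1 ≤ v) hQ0,
      mul_nonneg (mul_nonneg (by omega : (0:ℤ) ≤ cfA x (m+1)) (by omega : (0:ℤ) ≤ v - 1)) (by omega : (0:ℤ) ≤ cfQ x (m+1))]

end Core

section Helpers
variable {x : ℝ}

lemma sign_eq_of_mul_pos {a b : ℝ} (h : 0 < a * b) : Real.sign a = Real.sign b := by
  rcases lt_trichotomy a 0 with ha | ha | ha
  · have hb : b < 0 := by nlinarith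
    rw [Real.sign_of_neg ha, Real.sign_of_neg hb]
  · exfalso; rw [ha] at h; simp at h
  · have hb : 0 < b := by nlinarith
    rw [Real.sign_of_pos ha, Real.sign_of_pos hb]

lemma mul_pos_of_sign_eq {a b : ℝ} (ha : a ≠ 0) (hb : b ≠ 0)
    (h : Real.sign a = Real.sign b) : 0 < a * b := by
  rcases ha.lt_or_gt with h1 | h1 <;> rcases hb.lt_or_gt with h2 | h2
  · exact mul_pos_of_neg_of_neg h1 h2
  · exfalso; rw [Real.sign_of_neg h1, Real.sign_of_pos h2] at h; norm_num at h
  · exfalso; rw [Real.sign_of_pos h1, Real.sign_of_neg h2] at h; norm_num at h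
  · exact mul_pos h1 h2

lemma den_mul_sub_ne (hx : Irrational x) (s : ℚ) : (s.den : ℝ) * x - (s.num : ℝ) ≠ 0 := by
  intro h
  apply (irrational_iff_ne_rational x).mp hx s.num (s.den : ℤ) (by exact_mod_cast s.den_nz)
  have hd : (s.den : ℝ) ≠ 0 := by
    exact_mod_cast s.den_nz
  push_cast
  field_simp
  linarith

lemma chain_coprime (x : ℝ) (m : ℕ) (k : ℤ) :
    IsCoprime (k * cfP x (m+1) + cfP x m) (k * cfQ x (m+1) + cfQ x m) := by
  set d := cfP x m * cfQ x (m+1) - cfP x (m+1) * cfQ x m with hd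
  have hd2 : d ^ 2 = 1 := cfDet x m
  refine ⟨d * cfQ x (m+1), -(d * cfP x (m+1)), ?_⟩
  have h : d * cfQ x (m+1) * (k * cfP x (m+1) + cfP x m)
      + -(d * cfP x (m+1)) * (k * cfQ x (m+1) + cfQ x m) = d ^ 2 := by rw [hd]; ring
  rw [h, hd2]

lemma exists_rat (N Q : ℤ) (hQ : 0 < Q) (hcop : IsCoprime N Q) :
    ∃ s : ℚ, s.num = N ∧ (s.den : ℤ) = Q ∧ (s : ℝ) = (N : ℝ) / (Q : ℝ) := by
  have hg : Int.gcd N Q = 1 := Int.isCoprime_iff_gcd_eq_one.mp hcop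
  have hQnat : Q.toNat = Q.natAbs := by omega
  have hco : N.natAbs.Coprime Q.toNat := by
    rw [hQnat]; exact hg
  refine ⟨Rat.mk' N Q.toNat (by omega) hco, rfl, by simp [Rat.mk']; omega, ?_⟩
  rw [Rat.mk_eq_divInt]
  have : ((Q.toNat : ℤ)) = Q := by omega
  rw [this, Rat.cast_divInt_of_ne_zero]
  exact_mod_cast ne_of_gt hQ

end Helpers

section Mpr
variable {x : ℝ}

lemma chain_isBest (hx : Irrational x) (m : ℕ) (k : ℤ) (hk0 : 0 ≤ k)
    (hkt : (k : ℝ) < gaussIter x (m+1)) (r : ℚ)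
    (hnum : r.num = k * cfP x (m+1) + cfP x m)
    (hden : (r.den : ℤ) = k * cfQ x (m+1) + cfQ x m) :
    IsBestSignedApprox x r := by
  intro s hsle hsne hsign
  by_contra hcon
  push_neg at hcon
  have hb : 1 ≤ (s.den : ℤ) := by exact_mod_cast s.pos
  have hrform : (r.den : ℝ) * x - (r.num : ℝ)
      = ((k * cfQ x (m+1) + cfQ x m : ℤ) : ℝ) * x - ((k * cfP x (m+1) + cfP x m : ℤ) : ℝ) := by
    rw [← hnum, ← hden]; push_cast; ring
  have hsform : (s.den : ℝ) * x - (s.num : ℝ)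
      = ((s.den : ℤ) : ℝ) * x - ((s.num : ℤ) : ℝ) := by push_cast; ring
  have hs0 := den_mul_sub_ne hx s
  have hr0 := den_mul_sub_ne hx r
  have hprod : 0 < ((s.den : ℝ) * x - (s.num : ℝ)) * ((r.den : ℝ) * x - (r.num : ℝ)) :=
    mul_pos_of_sign_eq hs0 hr0 hsign
  have hcore := core_lemma hx m k s.num (s.den : ℤ) hk0 hkt hb
    (by rw [← hrform, ← hsform]; exact hprod)
    (by rw [← hrform, ← hsform]; exact hcon)
  rcases hcore with ⟨hd, hn⟩ | hge
  · exact hsne (Rat.ext (hn.trans hnum.symm) (by exact_mod_cast hd.trans hden.symm))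
  · have hQ1 := cfQ_pos hx m
    have hle : (s.den : ℤ) ≤ (r.den : ℤ) := by exact_mod_cast hsle
    rw [hden] at hle
    nlinarith
end Mpr

lemma cfD_alt2 {x : ℝ} (hx : Irrational x) (m : ℕ) {y : ℝ} (h : 0 < cfD x m * y) :
    0 < cfD x (m+2) * y := by
  have h1 := cfD_mul_neg hx (m+1)
  have h2 := cfD_mul_neg hx m
  rcases (cfD_ne_zero hx (m+1)).lt_or_gt with hD | hD
  · nlinarith
  · nlinarith

set_option maxHeartbeats 1000000 in
/-- Proposition 3.3: the best signed approximations of an irrational `x`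
are exactly the principal and intermediate convergents of `x`. -/
theorem bestSigned_iff_principal_or_intermediate (x : ℝ) (hx : Irrational x) (r : ℚ) :
    IsBestSignedApprox x r ↔
      ((∃ n : ℕ, (r : ℝ) = (cfP x (n + 1) : ℝ) / (cfQ x (n + 1) : ℝ)) ∨
        (∃ n : ℕ, ∃ k : ℤ, 1 ≤ n ∧ 1 ≤ k ∧ k < cfA x n ∧
          (r : ℝ) = ((k * cfP x n + cfP x (n - 1) : ℤ) : ℝ) /
            ((k * cfQ x n + cfQ x (n - 1) : ℤ) : ℝ))) := by
  constructor
  · intro hbest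
    classical
    have hq1 : (1:ℤ) ≤ (r.den : ℤ) := by exact_mod_cast r.pos
    set δ := (r.den : ℝ) * x - (r.num : ℝ) with hδdef
    have hδ0 : δ ≠ 0 := den_mul_sub_ne hx r
    set qZ : ℤ := (r.den : ℤ) with hqZ
    set B : ℕ := qZ.toNat + 2 with hB
    set Pr : ℕ → Prop := fun n => 1 ≤ n ∧ cfQ x (n-1) ≤ qZ ∧ 0 < cfD x (n-1) * δ with hPr
    have hbase : ∃ n0, n0 ≤ B ∧ Pr n0 := by
      rcases hδ0.lt_or_gt with h | h
      · refine ⟨1, by omega, le_refl 1, ?_, ?_⟩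
        · show cfQ x 0 ≤ qZ; show (0:ℤ) ≤ qZ; omega
        · show 0 < cfD x 0 * δ; rw [cfD_zero]; nlinarith
      · refine ⟨2, by omega, by omega, ?_, ?_⟩
        · show cfQ x 1 ≤ qZ; show (1:ℤ) ≤ qZ; omega
        · show 0 < cfD x 1 * δ; exact mul_pos (cfD_one_pos hx) h
    obtain ⟨n0, hn0le, hPn0⟩ := hbase
    have hPn : Pr (Nat.findGreatest Pr B) := Nat.findGreatest_spec hn0le hPn0
    obtain ⟨m, hm⟩ : ∃ m, Nat.findGreatest Pr B = m + 1 := ⟨Nat.findGreatest Pr B - 1, by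
      have := hPn.1; omega⟩
    rw [hm] at hPn
    obtain ⟨-, hQle, hsgn⟩ := hPn
    simp only [Nat.add_sub_cancel] at hQle hsgn
    have hnotP2 : ¬ Pr (m + 3) := by
      by_cases hBle : m + 3 ≤ B
      · exact Nat.findGreatest_is_greatest (by omega) hBle
      · rintro ⟨-, hQ2, -⟩
        have hg := cfQ_ge hx (m + 2)
        have : cfQ x ((m+3) - 1) = cfQ x (m+2) := by norm_num
        rw [this] at hQ2
        omega
    have hsgn2 : 0 < cfD x (m+2) * δ := cfD_alt2 hx m hsgn
    have hQ2gt : qZ < cfQ x (m+2) := by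
      by_contra hcon
      push_neg at hcon
      exact hnotP2 ⟨by omega, by simpa using hcon, by simpa using hsgn2⟩
    have hQ1 := cfQ_pos hx m
    have hQ0 := cfQ_nonneg hx m
    -- choose k
    set Kp : ℕ → Prop := fun k => (k:ℤ) * cfQ x (m+1) + cfQ x m ≤ qZ with hKp
    have hK0 : Kp 0 := by show ((0:ℕ):ℤ) * cfQ x (m+1) + cfQ x m ≤ qZ; push_cast; linarith
    obtain ⟨kN, hkN⟩ : ∃ k : ℕ, Nat.findGreatest Kp qZ.toNat = k := ⟨_, rfl⟩
    have hk : (kN:ℤ) * cfQ x (m+1) + cfQ x m ≤ qZ := by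
      have h := Nat.findGreatest_spec (Nat.zero_le qZ.toNat) hK0
      rw [hkN] at h; exact h
    have hklt : qZ < ((kN:ℤ) + 1) * cfQ x (m+1) + cfQ x m := by
      by_cases hBle : kN + 1 ≤ qZ.toNat
      · have := Nat.findGreatest_is_greatest (by omega : Nat.findGreatest Kp qZ.toNat < kN + 1) hBle
        rw [hKp] at this
        push_neg at this
        push_cast at this
        linarith
      · have hc : qZ ≤ (kN:ℤ) := by omega
        nlinarith
    clear hm hkN hK0 hnotP2 hPn0 hn0le hKp Kp hPr Pr hB B
    have hka : (kN:ℤ) < cfA x (m+1) := by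
      by_contra hcon
      push_neg at hcon
      have hQ2 : cfQ x (m+2) = cfA x (m+1) * cfQ x (m+1) + cfQ x m := rfl
      nlinarith
    have hkt : ((kN:ℤ):ℝ) < gaussIter x (m+1) := by
      have h1 : (((kN:ℤ)):ℝ) < (cfA x (m+1) : ℝ) := by exact_mod_cast hka
      exact lt_of_lt_of_le h1 (Int.floor_le _)
    have hQpos : (0:ℤ) < (kN:ℤ) * cfQ x (m+1) + cfQ x m := by
      rcases Nat.eq_zero_or_pos m with hm0 | hm0
      · subst hm0
        have hc1 : cfQ x 1 = 1 := rfl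
        have hc0 : cfQ x 0 = 0 := rfl
        rw [hc1, hc0] at hklt ⊢
        omega
      · obtain ⟨m', rfl⟩ : ∃ m', m = m' + 1 := ⟨m - 1, by omega⟩
        have := cfQ_pos hx m'
        nlinarith
    obtain ⟨s, hsnum, hsden, hscast⟩ := exists_rat _ _ hQpos (chain_coprime x m (kN:ℤ))
    rcases eq_or_ne s r with he | hne
    · -- r is the chain fraction: produce the disjunction
      have hrnum : r.num = (kN:ℤ) * cfP x (m+1) + cfP x m := he ▸ hsnum
      have hrden : (r.den : ℤ) = (kN:ℤ) * cfQ x (m+1) + cfQ x m := he ▸ hsden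
      have hrcast : (r:ℝ) = (((kN:ℤ) * cfP x (m+1) + cfP x m : ℤ):ℝ) /
          (((kN:ℤ) * cfQ x (m+1) + cfQ x m : ℤ):ℝ) := he ▸ hscast
      rcases Nat.eq_zero_or_pos kN with hk0 | hk0
      · left
        rw [hk0] at hrcast hrden
        norm_num at hrcast hrden
        have hmpos : 1 ≤ m := by
          rcases Nat.eq_zero_or_pos m with h0 | h0
          · exfalso
            rw [h0, show cfQ x 0 = 0 from rfl] at hrden
            omega
          · exact h0
        obtain ⟨m', rfl⟩ : ∃ m', m = m' + 1 := ⟨m - 1, by omega⟩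
        exact ⟨m', hrcast⟩
      · right
        refine ⟨m + 1, (kN:ℤ), by omega, by exact_mod_cast hk0, hka, ?_⟩
        simp only [Nat.add_sub_cancel]
        exact hrcast
    · -- otherwise, contradiction with bestness
      exfalso
      have hdenle : s.den ≤ r.den := by
        have h1 : (s.den:ℤ) ≤ (r.den:ℤ) := by rw [hsden]; exact hk
        exact_mod_cast h1
      set t := gaussIter x (m+1) with ht
      set D := cfD x (m+1) with hD
      have hDne : D ≠ 0 := cfD_ne_zero hx (m+1)
      have hD2 : 0 < D * D := mul_self_pos.mpr hDne
      have ht1 : 1 < t := one_lt_gaussIter hx m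
      have hsform : (s.den : ℝ) * x - (s.num : ℝ)
          = (((kN:ℤ) * cfQ x (m+1) + cfQ x m : ℤ):ℝ) * x
            - (((kN:ℤ) * cfP x (m+1) + cfP x m : ℤ):ℝ) := by
        rw [← hsnum, ← hsden]; push_cast; ring
      have hE : (s.den : ℝ) * x - (s.num : ℝ) = (((kN:ℤ):ℝ) - 1 * t) * D := by
        rw [hsform]
        have h := lin_comb hx m (kN:ℤ) 1
        push_cast at h ⊢
        linarith
      have hDm : cfD x m = -(t * D) := cfD_succ hx m
      have hEDm : 0 < ((s.den : ℝ) * x - (s.num : ℝ)) * cfD x m := by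
        rw [hE, hDm]
        have h3 : 0 < t - ((kN:ℤ):ℝ) := by linarith
        have h4 : (0:ℝ) < t := by linarith
        nlinarith [mul_pos (mul_pos h4 h3) hD2]
      have hEδ : 0 < ((s.den : ℝ) * x - (s.num : ℝ)) * δ := by
        have hDm2 : 0 < cfD x m * cfD x m := mul_self_pos.mpr (cfD_ne_zero hx m)
        nlinarith [mul_pos hEDm hsgn]
      have hsigneq : Real.sign ((s.den : ℝ) * x - (s.num : ℝ))
          = Real.sign ((r.den : ℝ) * x - (r.num : ℝ)) :=
        sign_eq_of_mul_pos hEδ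
      have hlt := hbest s hdenle hne hsigneq
      -- apply the core lemma to r itself
      have hrform : (r.den : ℝ) * x - (r.num : ℝ) = ((qZ:ℝ)) * x - ((r.num:ℤ):ℝ) := by
        rw [hqZ]; push_cast; ring
      have hcore := core_lemma hx m (kN:ℤ) r.num qZ (Int.natCast_nonneg kN) hkt hq1
        (by rw [← hrform, ← hsform, ← hδdef]; nlinarith [hEδ])
        (by rw [← hrform, ← hsform]; exact le_of_lt hlt)
      rcases hcore with ⟨hd, hn⟩ | hge
      · -- then r = s, contradiction with strict inequality
        apply hne
        refine Rat.ext (hsnum.trans hn.symm) ?_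
        have : (s.den:ℤ) = (r.den:ℤ) := by rw [hsden, ← hd]
        exact_mod_cast this
      · push_cast at hge
        linarith

  · rintro (⟨n, hn⟩ | ⟨n, k, hn1, hk1, hka, heq⟩)
    · -- principal convergent: level m = n+1, k = 0
      have hQpos : (0:ℤ) < 0 * cfQ x (n+2) + cfQ x (n+1) := by
        have := cfQ_pos hx n; omega
      obtain ⟨s, hsnum, hsden, hscast⟩ := exists_rat _ _ hQpos (chain_coprime x (n+1) 0)
      have hrs : r = s := by
        apply Rat.cast_injective (α := ℝ)
        rw [hscast, hn]
        push_cast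
        ring_nf
      rw [hrs]
      exact chain_isBest hx (n+1) 0 le_rfl
        (by have := one_lt_gaussIter hx (n+1); push_cast; linarith) s hsnum hsden
    · -- intermediate convergent
      obtain ⟨m, rfl⟩ : ∃ m, n = m + 1 := ⟨n - 1, by omega⟩
      simp only [Nat.add_sub_cancel] at heq
      have hQ1 := cfQ_pos hx m
      have hQ0 := cfQ_nonneg hx m
      have hQpos : (0:ℤ) < k * cfQ x (m+1) + cfQ x m := by nlinarith
      obtain ⟨s, hsnum, hsden, hscast⟩ := exists_rat _ _ hQpos (chain_coprime x m k)
      have hrs : r = s := by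
        apply Rat.cast_injective (α := ℝ)
        rw [hscast, heq]
      rw [hrs]
      refine chain_isBest hx m k (by omega) ?_ s hsnum hsden
      have h1 : ((k:ℝ)) < (cfA x (m+1) : ℝ) := by exact_mod_cast hka
      exact lt_of_lt_of_le h1 (Int.floor_le _)
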